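/- Let q be an odd prime power with q ≡ 1 (mod 4), let γ be an even positive divisor of q - 1, and set n = (q-1)/γ with n > 2 and n even. Then for every integer l with 0 ≤ l and 2γl ≤ q - 4γ - 1 there exists a negacyclic Hermitian LCD code over F_{q²} of length n, dimension n - 2l - 2 and minimum distance exactly 2l + 3; in particular this code is MDS. -/

import Mathlib

open Finset

/-- The negacyclic shift of a word: `(c_0, ..., c_{n-1}) ↦ (-c_{n-1}, c_0, ..., c_{n-2})`. -/
def negashift {F : Type*} [Neg F] {n : ℕ} (c : Fin n → F) : Fin n → F :=
  fun i =>
    if _h : (i : ℕ) = 0 then -c ⟨n - 1, Nat.sub_lt i.pos Nat.one_pos⟩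
    else c ⟨(i : ℕ) - 1, lt_of_le_of_lt (Nat.sub_le _ _) i.isLt⟩

/-- A linear code `C ≤ F^n` is negacyclic if it is closed under the negacyclic shift. -/
def IsNegacyclic {F : Type*} [Field F] {n : ℕ} (C : Submodule F (Fin n → F)) : Prop :=
  ∀ c ∈ C, negashift c ∈ C

/-- `C` is an LCD code: `C ∩ C^⊥ = {0}` for the Euclidean inner product. -/
def IsLCD {F : Type*} [Field F] {n : ℕ} (C : Submodule F (Fin n → F)) : Prop :=
  ∀ x ∈ C, (∀ y ∈ C, ∑ i, x i * y i = 0) → x = 0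

/-- `C` is a Hermitian LCD code: `C ∩ C^{⊥H} = {0}` for the Hermitian inner product
`⟨x, y⟩ = ∑ x_i y_i^q`. -/
def IsHermLCD (q : ℕ) {F : Type*} [Field F] {n : ℕ} (C : Submodule F (Fin n → F)) : Prop :=
  ∀ x ∈ C, (∀ y ∈ C, ∑ i, x i * (y i) ^ q = 0) → x = 0

open scoped Classical in
/-- The Hamming weight of a word. -/
noncomputable def wt {F : Type*} [Zero F] {n : ℕ} (c : Fin n → F) : ℕ :=
  (Finset.univ.filter fun i => c i ≠ 0).card

/-- The minimum distance of the code `C` is exactly `d`: `d` is the least Hamming weight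
of a nonzero codeword. -/
def HasMinDist {F : Type*} [Zero F] {n : ℕ} (C : Set (Fin n → F)) (d : ℕ) : Prop :=
  IsLeast {w : ℕ | ∃ c ∈ C, c ≠ 0 ∧ wt c = w} d

section Aux
variable {E : Type*} [Field E]

/-- DFT-type vectors for the negacyclic code. -/
def Wv (η : Eˣ) (n : ℕ) (k : ℤ) : Fin n → E :=
  fun i => ((η ^ ((2*k+1) * ((i : ℕ) : ℤ)) : Eˣ) : E)

lemma zpow_one_iff (η : Eˣ) {n : ℕ} (hord : orderOf η = 2*n) (z : ℤ) :
    η ^ z = 1 ↔ (2*(n:ℤ)) ∣ z := by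
  rw [← orderOf_dvd_iff_zpow_eq_one, hord]
  push_cast
  rfl

lemma dvd_small {n : ℕ} {d : ℤ} (h : (n:ℤ) ∣ d) (h1 : -(n:ℤ) < d) (h2 : d < n) : d = 0 := by
  have hn0 : (0:ℤ) < n := by
    rcases Nat.eq_zero_or_pos n with h0 | h0
    · subst h0; simp at h1 h2; linarith
    · exact_mod_cast h0
  rcases h with ⟨t, rfl⟩
  have habs : |(n:ℤ)*t| < n := abs_lt.mpr ⟨h1, h2⟩
  rw [abs_mul, abs_of_nonneg (le_of_lt hn0)] at habs
  have ht : |t| < 1 := lt_of_mul_lt_mul_left (by simpa using habs) (le_of_lt hn0)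
  have ht2 := abs_lt.mp ht
  have : t = 0 := by omega
  rw [this, mul_zero]

lemma geo (η : Eˣ) {n : ℕ} (hord : orderOf η = 2*n) (hn0 : 0 < n) (a : ℤ) :
    ∑ i ∈ Finset.range n, ((η ^ (2*a*(i:ℤ)) : Eˣ) : E) = if (n:ℤ) ∣ a then (n:E) else 0 := by
  have hterm : ∀ i : ℕ, ((η ^ (2*a*(i:ℤ)) : Eˣ) : E) = (((η ^ (2*a) : Eˣ) : E))^i := by
    intro i
    rw [← Units.val_pow_eq_pow_val, ← zpow_natCast (η ^ (2*a)), ← zpow_mul]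
  simp only [hterm]
  by_cases h : (n:ℤ) ∣ a
  · have h1 : η ^ (2*a) = 1 := by
      rw [zpow_one_iff η hord]
      exact mul_dvd_mul_left 2 h
    rw [h1, if_pos h]
    simp
  · have hne : (((η ^ (2*a) : Eˣ)):E) ≠ 1 := by
      intro hcon
      apply h
      have h1 : η^(2*a) = 1 := Units.ext hcon
      rw [zpow_one_iff η hord] at h1
      exact (mul_dvd_mul_iff_left (two_ne_zero)).mp h1
    have hxn : (((η ^ (2*a) : Eˣ)):E) ^ n = 1 := by
      rw [← Units.val_pow_eq_pow_val, ← zpow_natCast (η^(2*a)), ← zpow_mul]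
      have h1 : η ^ (2*a*(n:ℤ)) = 1 := by
        rw [zpow_one_iff η hord]
        exact ⟨a, by ring⟩
      rw [h1, Units.val_one]
    rw [geom_sum_eq hne, hxn]
    simp [h]

lemma pairW (η : Eˣ) {n : ℕ} (hord : orderOf η = 2*n) (hn0 : 0 < n) (k m : ℤ) :
    ∑ i : Fin n, Wv η n k i * Wv η n m i = if (n:ℤ) ∣ (k+m+1) then (n:E) else 0 := by
  have hterm : ∀ i : Fin n, Wv η n k i * Wv η n m i
      = ((η ^ (2*(k+m+1)*((i:ℕ):ℤ)) : Eˣ) : E) := by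
    intro i
    rw [Wv, Wv, ← Units.val_mul, ← zpow_add]
    congr 1
    ring
  simp only [hterm]
  rw [Fin.sum_univ_eq_sum_range (fun i => ((η ^ (2*(k+m+1)*(i:ℤ)) : Eˣ) : E)) n]
  exact geo η hord hn0 _

lemma Wv_period (η : Eˣ) {n : ℕ} (hord : orderOf η = 2*n) (k : ℤ) :
    Wv η n (k + n) = Wv η n k := by
  funext i
  rw [Wv, Wv]
  have he : (2*(k+(n:ℤ))+1) * ((i:ℕ):ℤ) = (2*k+1)*((i:ℕ):ℤ) + 2*(n:ℤ)*((i:ℕ):ℤ) := by ring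
  rw [he, zpow_add, Units.val_mul]
  have h1 : η ^ (2*(n:ℤ)*((i:ℕ):ℤ)) = 1 := by
    rw [zpow_one_iff η hord]
    exact ⟨(i:ℕ), by ring⟩
  rw [h1, Units.val_one, mul_one]

lemma pow_q_eq (η : Eˣ) {n : ℕ} (hord : orderOf η = 2*n) (q c : ℕ) (hqc : q = 2*n*c + 1)
    (z : ℤ) : (((η^z : Eˣ) : E))^q = ((η^z : Eˣ) : E) := by
  rw [← Units.val_pow_eq_pow_val, ← zpow_natCast (η^z), ← zpow_mul]
  have h1 : η ^ (z*(q:ℤ)) = η ^ z * η ^ (2*(n:ℤ)*(z*c)) := by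
    rw [← zpow_add]
    congr 1
    subst hqc
    push_cast
    ring
  have h2 : η ^ (2*(n:ℤ)*(z*c)) = 1 := by
    rw [zpow_one_iff η hord]
    exact ⟨z*c, by ring⟩
  rw [h1, h2, mul_one]

lemma eta_pow_n (η : Eˣ) {n : ℕ} (hord : orderOf η = 2*n) (hn0 : 0 < n) :
    ((η ^ ((n:ℕ):ℤ) : Eˣ) : E) = -1 := by
  set x : E := ((η ^ ((n:ℕ):ℤ) : Eˣ) : E) with hx
  have hx2 : x * x = 1 := by
    rw [hx, ← Units.val_mul, ← zpow_add]
    have : η ^ (((n:ℕ):ℤ) + ((n:ℕ):ℤ)) = 1 := by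
      rw [zpow_one_iff η hord]
      exact ⟨1, by ring⟩
    rw [this, Units.val_one]
  have hx1 : x ≠ 1 := by
    intro hcon
    have h1 : η ^ ((n:ℕ):ℤ) = 1 := Units.ext hcon
    rw [zpow_one_iff η hord] at h1
    have := Int.le_of_dvd (by exact_mod_cast hn0) h1
    omega
  rcases mul_self_eq_one_iff.mp hx2 with h | h
  · exact absurd h hx1
  · exact h

lemma negashift_add {F : Type*} [Field F] {n : ℕ} (x y : Fin n → F) :
    negashift (x + y) = negashift x + negashift y := by
  funext i
  simp only [negashift, Pi.add_apply]
  split_ifs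
  · rw [neg_add]
  · rfl

lemma negashift_smul {F : Type*} [Field F] {n : ℕ} (a : F) (x : Fin n → F) :
    negashift (a • x) = a • negashift x := by
  funext i
  simp only [negashift, Pi.smul_apply, smul_eq_mul]
  split_ifs
  · rw [mul_neg]
  · rfl

lemma negashift_zero {F : Type*} [Field F] {n : ℕ} :
    negashift (0 : Fin n → F) = 0 := by
  funext i
  simp only [negashift, Pi.zero_apply]
  split_ifs <;> simp

lemma negashift_Wv (η : Eˣ) {n : ℕ} (hord : orderOf η = 2*n) (hn0 : 0 < n) (k : ℤ) :
    negashift (Wv η n k) = ((η ^ (-(2*k+1)) : Eˣ) : E) • Wv η n k := by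
  funext i
  simp only [negashift, Wv, Pi.smul_apply, smul_eq_mul]
  split_ifs with h
  · rw [h]
    have hc : (((n - 1 : ℕ) : ℕ) : ℤ) = (n:ℤ) - 1 := by omega
    simp only [hc, Nat.cast_zero, mul_zero, zpow_zero, Units.val_one, mul_one]
    have he : (2*k+1) * ((n:ℤ) - 1) = (n:ℤ)*(2*k+1) + (-(2*k+1)) := by ring
    rw [he, zpow_add, Units.val_mul, zpow_mul, Units.val_zpow_eq_zpow_val,
      eta_pow_n η hord hn0, Odd.neg_one_zpow ⟨k, by ring⟩]
    ring
  · have hi : 1 ≤ (i:ℕ) := Nat.one_le_iff_ne_zero.mpr h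
    have hc : ((((i:ℕ) - 1 : ℕ)) : ℤ) = ((i:ℕ):ℤ) - 1 := by omega
    simp only [hc]
    rw [← Units.val_mul, ← zpow_add]
    congr 2
    ring

lemma tau_inj (η : Eˣ) {n : ℕ} (hord : orderOf η = 2*n) :
    Function.Injective (fun i : Fin n => ((η ^ (2*((i:ℕ):ℤ)) : Eˣ) : E)) := by
  intro i j hij
  have h1 : η ^ (2*((i:ℕ):ℤ)) = η ^ (2*((j:ℕ):ℤ)) := Units.ext hij
  have h2 : η ^ (2*((i:ℕ):ℤ) - 2*((j:ℕ):ℤ)) = 1 := by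
    rw [zpow_sub, h1, mul_inv_cancel]
  rw [zpow_one_iff η hord] at h2
  have h3 : (n:ℤ) ∣ ((i:ℕ):ℤ) - ((j:ℕ):ℤ) := by
    apply (mul_dvd_mul_iff_left (two_ne_zero (α := ℤ))).mp
    convert h2 using 1
    case e'_2 => rfl
    ring
  have hi := i.isLt
  have hj := j.isLt
  have h4 : ((i:ℕ):ℤ) - ((j:ℕ):ℤ) = 0 := dvd_small h3 (by omega) (by omega)
  exact Fin.ext (by omega)

lemma pair_single (η : Eˣ) {n : ℕ} (hord : orderOf η = 2*n) (hn0 : 0 < n) (i i0 : Fin n) :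
    ∑ m ∈ Finset.range n, Wv η n (m:ℤ) i * Wv η n (-1-(m:ℤ)) i0
      = if i = i0 then (n:E) else 0 := by
  set d : ℤ := ((i:ℕ):ℤ) - ((i0:ℕ):ℤ) with hd
  have hterm : ∀ m : ℕ, Wv η n (m:ℤ) i * Wv η n (-1-(m:ℤ)) i0
      = ((η^d : Eˣ):E) * ((η^(2*d*((m:ℕ):ℤ)) : Eˣ):E) := by
    intro m
    rw [Wv, Wv, ← Units.val_mul, ← zpow_add, ← Units.val_mul, ← zpow_add]
    congr 2
    ring
  simp only [hterm]
  rw [← Finset.mul_sum, geo η hord hn0 d]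
  have hi := i.isLt
  have hi0 := i0.isLt
  by_cases h : i = i0
  · subst h
    have hd0 : d = 0 := by omega
    rw [hd0, if_pos (dvd_zero _)]
    simp
  · rw [if_neg, if_neg h, mul_zero]
    intro hdvd
    have hd0 : d = 0 := dvd_small hdvd (by omega) (by omega)
    exact h (Fin.ext (by omega))

lemma dft_inv (η : Eˣ) {n : ℕ} (hord : orderOf η = 2*n) (hn0 : 0 < n)
    (x : Fin n → E) (i0 : Fin n) :
    ∑ m ∈ Finset.range n, (∑ i, x i * Wv η n (m:ℤ) i) * Wv η n (-1-(m:ℤ)) i0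
      = (n : E) * x i0 := by
  have h1 : ∀ m ∈ Finset.range n,
      (∑ i, x i * Wv η n (m:ℤ) i) * Wv η n (-1-(m:ℤ)) i0
        = ∑ i, x i * (Wv η n (m:ℤ) i * Wv η n (-1-(m:ℤ)) i0) := by
    intro m _
    rw [Finset.sum_mul]
    simp_rw [mul_assoc]
  rw [Finset.sum_congr rfl h1, Finset.sum_comm]
  have h2 : ∀ i : Fin n,
      ∑ m ∈ Finset.range n, x i * (Wv η n (m:ℤ) i * Wv η n (-1-(m:ℤ)) i0)
        = x i * (if i = i0 then (n:E) else 0) := by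
    intro i
    rw [← Finset.mul_sum, pair_single η hord hn0 i i0]
  rw [Finset.sum_congr rfl (fun i _ => h2 i)]
  simp only [mul_ite, mul_zero]
  rw [Finset.sum_ite_eq' Finset.univ i0]
  simp [mul_comm]

end Aux


lemma card_filter_coe_lt {n m : ℕ} (h : m ≤ n) :
    (Finset.univ.filter fun i : Fin n => (i:ℕ) < m).card = m := by
  classical
  have h2 : (Finset.univ.filter fun i : Fin n => (i:ℕ) < m).card = (Finset.range m).card := by
    refine Finset.card_bij (fun (i : Fin n) _ => (i:ℕ)) ?_ ?_ ?_
    · intro a ha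
      rw [Finset.mem_filter] at ha
      exact Finset.mem_range.mpr ha.2
    · intro a _ b _ hab
      exact Fin.ext hab
    · intro b hb
      rw [Finset.mem_range] at hb
      exact ⟨⟨b, lt_of_lt_of_le hb h⟩, Finset.mem_filter.mpr ⟨Finset.mem_univ _, hb⟩, rfl⟩
  rw [Finset.card_range] at h2
  exact h2


lemma bch_zero {E : Type*} [Field E] (η : Eˣ) {n : ℕ} (hord : orderOf η = 2*n)
    (c : Fin n → E) (j0 : ℤ) (S : Finset (Fin n))
    (hSsupp : ∀ i, i ∉ S → c i = 0)
    (heqs : ∀ j' : ℕ, j' < S.card → (∑ i, c i * Wv η n (j0 + (j':ℤ)) i) = 0) :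
    c = 0 := by
  classical
  set e := S.equivFin with he
  set f : Fin S.card → E :=
    fun a => ((η ^ (2*((((e.symm a : ↥S) : Fin n):ℕ):ℤ)) : Eˣ) : E) with hf
  set v : Fin S.card → E :=
    fun a => c ((e.symm a : ↥S) : Fin n) * Wv η n j0 ((e.symm a : ↥S) : Fin n) with hv
  have key : ∀ j' : Fin S.card, ∑ a : Fin S.card, v a * f a ^ (j':ℕ) = 0 := by
    intro j'
    set G : Fin n → E :=
      fun i => c i * Wv η n j0 i * ((η ^ (2*((i:ℕ):ℤ)) : Eˣ) : E) ^ (j':ℕ) with hG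
    have h1 : ∑ a : Fin S.card, v a * f a ^ (j':ℕ) = ∑ s' : ↥S, G (s' : Fin n) :=
      Equiv.sum_comp e.symm (fun s' : ↥S => G (s' : Fin n))
    have h2 : ∑ s' : ↥S, G (s' : Fin n) = ∑ i ∈ S, G i := Finset.sum_coe_sort S G
    have h3 : ∑ i ∈ S, G i = ∑ i : Fin n, G i := by
      apply Finset.sum_subset (Finset.subset_univ S)
      intro i _ hiS
      rw [hG]
      simp only
      rw [hSsupp i hiS, zero_mul, zero_mul]
    have h4 : ∑ i : Fin n, G i = ∑ i, c i * Wv η n (j0 + ((j':ℕ):ℤ)) i := by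
      refine Finset.sum_congr rfl fun i _ => ?_
      rw [hG]
      simp only
      rw [mul_assoc]
      congr 1
      show ((η ^ ((2*j0+1) * ((i:ℕ):ℤ)) : Eˣ) : E)
            * ((η ^ (2*((i:ℕ):ℤ)) : Eˣ) : E) ^ ((j':ℕ))
          = ((η ^ ((2*(j0 + ((j':ℕ):ℤ))+1) * ((i:ℕ):ℤ)) : Eˣ) : E)
      rw [← Units.val_pow_eq_pow_val, ← zpow_natCast (η ^ (2*((i:ℕ):ℤ))), ← zpow_mul,
        ← Units.val_mul, ← zpow_add]
      congr 2
      ring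
    rw [h1, h2, h3, h4]
    exact heqs _ j'.isLt
  have hinj : Function.Injective f := by
    intro a b hab
    have h1 : ((e.symm a : ↥S) : Fin n) = ((e.symm b : ↥S) : Fin n) := tau_inj η hord hab
    exact e.symm.injective (Subtype.ext h1)
  have hv0 := Matrix.eq_zero_of_forall_pow_sum_mul_pow_eq_zero hinj key
  funext i
  by_cases hiS : i ∈ S
  · have hb := congrFun hv0 (e ⟨i, hiS⟩)
    rw [hv] at hb
    simp only [Equiv.symm_apply_apply, Pi.zero_apply] at hb
    have hu : Wv η n j0 i ≠ 0 := by
      show ((η ^ ((2*j0+1) * ((i:ℕ):ℤ)) : Eˣ) : E) ≠ 0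
      exact Units.ne_zero _
    have hb2 := (mul_eq_zero.mp hb).resolve_right hu
    simpa using hb2
  · simp [hSsupp i hiS]


noncomputable def codeT (l n : ℕ) : Finset ℤ := Finset.Icc ((l:ℤ)+1) ((n:ℤ)-(l:ℤ)-2)

def codeC (E : Type*) [Field E] (η : Eˣ) (n l : ℕ) : Submodule E (Fin n → E) :=
  Submodule.span E (Set.range fun k : codeT l n => Wv η n (k:ℤ))

lemma mem_codeC (E : Type*) [Field E] (η : Eˣ) (n l : ℕ) {k : ℤ} (hk : k ∈ codeT l n) :
    Wv η n k ∈ codeC E η n l :=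
  Submodule.subset_span ⟨⟨k, hk⟩, rfl⟩

theorem stmt_11 (q : ℕ) (hq : IsPrimePow q) (hqodd : Odd q) (hmod : q % 4 = 1)
    (E : Type) [Field E] [Fintype E] (hE : Fintype.card E = q ^ 2)
    (γ : ℕ) (hγ : 0 < γ) (hγpar : Even γ) (hdvd : γ ∣ q - 1)
    (n : ℕ) (hn : n = (q - 1) / γ) (hn2 : 2 < n) (hneven : Even n)
    (l : ℕ) (hl : 2 * γ * l + 4 * γ + 1 ≤ q) :
    ∃ C : Submodule E (Fin n → E),
      IsNegacyclic C ∧ IsHermLCD q C ∧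
      Module.finrank E C = n - 2 * l - 2 ∧
      HasMinDist (C : Set (Fin n → E)) (2 * l + 3) := by
  classical
  have hq1 : 1 < q := hq.one_lt
  have hγn : γ * n = q - 1 := by rw [hn, Nat.mul_div_cancel' hdvd]
  obtain ⟨γ2, hγ2⟩ := hγpar
  have h2n : q - 1 = 2*n*γ2 := by
    calc q - 1 = γ * n := hγn.symm
    _ = 2*n*γ2 := by rw [hγ2]; ring
  have hn0 : 0 < n := by omega
  have hγ2pos : 0 < γ2 := by
    rcases Nat.eq_zero_or_pos γ2 with h | h
    · exfalso; omega
    · exact h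
  have h2l4 : 2*l + 4 ≤ n := by
    have h1 : γ*(2*l+4) ≤ γ*n := by
      rw [hγn]
      calc γ*(2*l+4) = 2*γ*l + 4*γ := by ring
      _ ≤ q - 1 := by omega
    exact Nat.le_of_mul_le_mul_left h1 hγ
  have hqn : q = 2*n*γ2 + 1 := by omega
  -- the field element count
  have hcard : Fintype.card Eˣ = q^2 - 1 := by rw [Fintype.card_units, hE]
  have hq2 : q^2 - 1 = (q-1)*(q+1) := by
    have h1 : 1 ≤ q := le_of_lt hq1
    have h2 : 1 ≤ q^2 := Nat.one_le_pow _ _ (by omega)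
    zify [h1, h2]
    ring
  have h2nq2 : 2*n ∣ q^2 - 1 := by
    rw [hq2]
    exact Dvd.dvd.mul_right ⟨γ2, h2n⟩ _
  -- (n : E) ≠ 0
  have hnE : (n:E) ≠ 0 := by
    intro hcon
    have hndvd : n ∣ q - 1 := ⟨γ, by rw [← hγn]; ring⟩
    have hco : Nat.Coprime n (q^2) := by
      apply Nat.Coprime.pow_right
      apply Nat.Coprime.coprime_dvd_left hndvd
      exact (Nat.coprime_self_sub_left (by omega)).mpr (Nat.coprime_one_left q)
    obtain ⟨a, b, hab⟩ := Nat.isCoprime_iff_coprime.mpr hco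
    have hq2E : ((q^2 : ℕ) : E) = 0 := by
      rw [← hE]
      exact FiniteField.cast_card_eq_zero E
    have : (1 : E) = 0 := by
      calc (1:E) = ((a * (n:ℤ) + b * ((q^2 : ℕ):ℤ) : ℤ) : E) := by rw [hab]; simp
      _ = (a:E) * (n:E) + (b:E) * ((q^2:ℕ):E) := by push_cast; ring
      _ = 0 := by rw [hcon, hq2E]; ring
    exact one_ne_zero this
  -- a primitive 2n-th root of unity
  obtain ⟨g, hg⟩ := IsCyclic.exists_ofOrder_eq_natCard (α := Eˣ)
  obtain ⟨t, ht⟩ := h2nq2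
  have ht0 : 0 < t := by
    rcases Nat.eq_zero_or_pos t with h | h
    · exfalso
      rw [h, mul_zero] at ht
      have h4 : 2*2 ≤ q^2 := by
        rw [pow_two]
        exact Nat.mul_le_mul hq1 hq1
      omega
    · exact h
  have hord : orderOf (g ^ t) = 2*n := by
    rw [orderOf_pow, hg, Nat.card_eq_fintype_card, hcard, ht,
        Nat.gcd_eq_right (dvd_mul_left t (2*n)), Nat.mul_div_cancel _ ht0]
  obtain ⟨η, hord⟩ : ∃ η : Eˣ, orderOf η = 2*n := ⟨g ^ t, hord⟩
  have hWmem : ∀ k : ℤ, k ∈ codeT l n → Wv η n k ∈ codeC E η n l :=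
    fun k hk => mem_codeC E η n l hk
  -- evaluation of codewords at the defining roots
  have evalC : ∀ (j : ℤ), -(l:ℤ)-1 ≤ j → j ≤ (l:ℤ) → ∀ c, c ∈ codeC E η n l → (∑ i, c i * Wv η n j i) = 0 := by
    intro j hj1 hj2 c hc
    induction hc using Submodule.span_induction with
    | mem x hx =>
      obtain ⟨k, rfl⟩ := hx
      have hkT := k.2
      simp only [codeT, Finset.mem_Icc] at hkT
      show (∑ i, Wv η n (k:ℤ) i * Wv η n j i) = 0
      rw [pairW η hord hn0, if_neg]
      intro hdvd
      have := dvd_small hdvd (by omega) (by omega)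
      omega
    | zero => simp
    | add x y hx hy ihx ihy =>
      simp only [Pi.add_apply, add_mul, Finset.sum_add_distrib, ihx, ihy, add_zero]
    | smul a x hx ih =>
      simp only [Pi.smul_apply, smul_eq_mul, mul_assoc, ← Finset.mul_sum, ih, mul_zero]
  -- periodicity
  have hper : ∀ m : ℤ, Wv η n m = Wv η n (m - n) := by
    intro m
    have := Wv_period η hord (m - (n:ℤ))
    rw [← this]
    congr 1
    ring
  refine ⟨codeC E η n l, ?_, ?_, ?_, ?_⟩
  · -- IsNegacyclic
    intro c hc
    induction hc using Submodule.span_induction with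
    | mem x hx =>
      obtain ⟨k, rfl⟩ := hx
      have h1 : negashift (Wv η n (k:ℤ)) = ((η ^ (-(2*(k:ℤ)+1)) : Eˣ) : E) • Wv η n (k:ℤ) :=
        negashift_Wv η hord hn0 _
      rw [h1]
      exact (codeC E η n l).smul_mem _ (hWmem _ k.2)
    | zero => rw [negashift_zero]; exact (codeC E η n l).zero_mem
    | add x y hx hy ihx ihy => rw [negashift_add]; exact (codeC E η n l).add_mem ihx ihy
    | smul a x hx ih => rw [negashift_smul]; exact (codeC E η n l).smul_mem a ih
  · -- IsHermLCD
    intro x hx hperp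
    have hall : ∀ m ∈ Finset.range n, (∑ i, x i * Wv η n (m:ℤ) i) = 0 := by
      intro m hm
      rw [Finset.mem_range] at hm
      by_cases hmT : (l:ℤ)+1 ≤ (m:ℤ) ∧ (m:ℤ) ≤ (n:ℤ)-(l:ℤ)-2
      · have hy : Wv η n (m:ℤ) ∈ codeC E η n l := hWmem _ (by simp only [codeT, Finset.mem_Icc]; exact hmT)
        have hq_eq : ∀ i : Fin n, (Wv η n (m:ℤ) i)^q = Wv η n (m:ℤ) i := by
          intro i
          show (((η ^ ((2*(m:ℤ)+1) * ((i:ℕ):ℤ)) : Eˣ) : E))^q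
            = ((η ^ ((2*(m:ℤ)+1) * ((i:ℕ):ℤ)) : Eˣ) : E)
          exact pow_q_eq η hord q γ2 hqn _
        have := hperp (Wv η n (m:ℤ)) hy
        simp only [hq_eq] at this
        exact this
      · push_neg at hmT
        by_cases hm1 : (m:ℤ) ≤ (l:ℤ)
        · exact evalC m (by omega) hm1 x hx
        · have hm2 : (n:ℤ)-(l:ℤ)-2 < (m:ℤ) := hmT (by omega)
          rw [hper (m:ℤ)]
          exact evalC _ (by omega) (by omega) x hx
    funext i0
    have h0 : (n:E) * x i0 = 0 := by
      rw [← dft_inv η hord hn0 x i0]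
      apply Finset.sum_eq_zero
      intro m hm
      rw [hall m hm, zero_mul]
    rcases mul_eq_zero.mp h0 with h | h
    · exact absurd h hnE
    · exact h
  · -- finrank
    have li : LinearIndependent E (fun k : codeT l n => Wv η n (k:ℤ)) := by
      rw [linearIndependent_iff']
      intro s gc hsum k₀ hk₀
      set m : ℤ := (n:ℤ)-1-(k₀:ℤ) with hm
      have hk₀T := k₀.2
      simp only [codeT, Finset.mem_Icc] at hk₀T
      have h0 : ∑ i, (∑ k ∈ s, gc k • Wv η n (k:ℤ)) i * Wv η n m i = 0 := by
        rw [hsum]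
        simp
      have h1 : ∑ k ∈ s, gc k * (∑ i, Wv η n (k:ℤ) i * Wv η n m i) = 0 := by
        calc ∑ k ∈ s, gc k * (∑ i, Wv η n (k:ℤ) i * Wv η n m i)
            = ∑ k ∈ s, ∑ i, gc k * (Wv η n (k:ℤ) i * Wv η n m i) := by
              simp_rw [Finset.mul_sum]
          _ = ∑ i : Fin n, ∑ k ∈ s, gc k * (Wv η n (k:ℤ) i * Wv η n m i) := Finset.sum_comm
          _ = ∑ i : Fin n, (∑ k ∈ s, gc k • Wv η n (k:ℤ)) i * Wv η n m i := by
              apply Finset.sum_congr rfl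
              intro i _
              rw [Finset.sum_apply, Finset.sum_mul]
              apply Finset.sum_congr rfl
              intro k _
              simp [mul_assoc]
          _ = 0 := h0
      have h2 : ∀ k ∈ s, gc k * (∑ i, Wv η n (k:ℤ) i * Wv η n m i)
          = if k = k₀ then gc k * (n:E) else 0 := by
        intro k _
        have hkT := k.2
        simp only [codeT, Finset.mem_Icc] at hkT
        rw [pairW η hord hn0]
        by_cases hk : k = k₀
        · rw [if_pos hk, if_pos]
          refine ⟨1, ?_⟩
          rw [hk]
          ring
        · rw [if_neg, if_neg hk, mul_zero]
          intro hdvd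
          have hke : (k:ℤ) ≠ (k₀:ℤ) := fun hc => hk (Subtype.ext hc)
          have hd2 : (n:ℤ) ∣ ((k:ℤ) + m + 1 - n) := by
            exact dvd_sub hdvd ⟨1, by ring⟩
          have := dvd_small hd2 (by omega) (by omega)
          omega
      rw [Finset.sum_congr rfl h2, Finset.sum_ite_eq' s k₀, if_pos hk₀] at h1
      rcases mul_eq_zero.mp h1 with h | h
      · exact h
      · exact absurd h hnE
    rw [codeC, finrank_span_eq_card li, Fintype.card_coe, codeT, Int.card_Icc]
    omega
  · -- HasMinDist
    have hlow : ∀ c, c ∈ codeC E η n l → c ≠ 0 → 2*l+3 ≤ wt c := by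
      intro c hcC hcne
      by_contra hlt
      push_neg at hlt
      set S : Finset (Fin n) := Finset.univ.filter (fun i => c i ≠ 0) with hS
      have hwtS : wt c = S.card := by rw [wt, hS]
      have hSne : S.Nonempty := by
        rcases Function.ne_iff.mp hcne with ⟨i, hi⟩
        refine ⟨i, ?_⟩
        rw [hS, Finset.mem_filter]
        exact ⟨Finset.mem_univ _, by simpa using hi⟩
      have hw1 : 1 ≤ S.card := Finset.card_pos.mpr hSne
      have hw2 : S.card ≤ 2*l+2 := by omega
      have hczero : c = 0 := by
        apply bch_zero η hord c (-(l:ℤ)-1) S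
        · intro i hiS
          by_contra hne
          exact hiS (by rw [hS, Finset.mem_filter]; exact ⟨Finset.mem_univ _, hne⟩)
        · intro j' hj'
          exact evalC _ (by omega) (by omega) c hcC
      exact hcne hczero
    have h2l3n : 2*l+3 < n := by omega
    set gp : Polynomial E := ∏ j ∈ Finset.Icc (-(l:ℤ)-1) (l:ℤ),
      (Polynomial.X - Polynomial.C (((η ^ (2*j+1) : Eˣ) : E))) with hgp
    have hJcard : (Finset.Icc (-(l:ℤ)-1) (l:ℤ)).card = 2*l+2 := by
      rw [Int.card_Icc]
      omega
    have hmonic : gp.Monic :=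
      Polynomial.monic_prod_of_monic _ _ (fun j _ => Polynomial.monic_X_sub_C _)
    have hdeg : gp.natDegree = 2*l+2 := by
      rw [hgp, Polynomial.natDegree_prod]
      · simp only [Polynomial.natDegree_X_sub_C]
        rw [Finset.sum_const, hJcard, smul_eq_mul, mul_one]
      · intro j _
        exact Polynomial.X_sub_C_ne_zero _
    set cg : Fin n → E := fun i => gp.coeff (i:ℕ) with hcg
    have hcgne : cg ≠ 0 := by
      intro hcon
      have h1 : gp.coeff (2*l+2) = 1 := by
        rw [← hdeg]
        exact hmonic.coeff_natDegree
      have h2 : cg ⟨2*l+2, by omega⟩ = 0 := by rw [hcon]; rfl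
      rw [hcg] at h2
      simp only at h2
      rw [h1] at h2
      exact one_ne_zero h2
    have heval : ∀ jz : ℤ, (∑ i, cg i * Wv η n jz i) = gp.eval (((η ^ (2*jz+1) : Eˣ) : E)) := by
      intro jz
      rw [Polynomial.eval_eq_sum_range' (show gp.natDegree < n by omega),
        ← Fin.sum_univ_eq_sum_range (fun i => gp.coeff i * ((η ^ (2*jz+1) : Eˣ) : E) ^ i) n]
      refine Finset.sum_congr rfl fun i _ => ?_
      rw [hcg]
      congr 1
      show ((η ^ ((2*jz+1) * ((i:ℕ):ℤ)) : Eˣ) : E) = ((η ^ (2*jz+1) : Eˣ) : E) ^ (i:ℕ)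
      rw [← Units.val_pow_eq_pow_val, ← zpow_natCast (η ^ (2*jz+1)), ← zpow_mul]
    have hval0 : ∀ j ∈ Finset.Icc (-(l:ℤ)-1) (l:ℤ), gp.eval (((η ^ (2*j+1) : Eˣ) : E)) = 0 := by
      intro j hj
      rw [hgp, Polynomial.eval_prod]
      apply Finset.prod_eq_zero hj
      simp
    have hcgC : cg ∈ codeC E η n l := by
      have hmem : (∑ m ∈ Finset.range n, (∑ i, cg i * Wv η n (m:ℤ) i) • Wv η n (-1-(m:ℤ)))
          ∈ codeC E η n l := by
        apply Submodule.sum_mem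
        intro m hm
        rw [Finset.mem_range] at hm
        by_cases hmT : (l:ℤ)+1 ≤ (m:ℤ) ∧ (m:ℤ) ≤ (n:ℤ)-(l:ℤ)-2
        · apply Submodule.smul_mem
          have hpm : Wv η n (-1-(m:ℤ)) = Wv η n ((n:ℤ)-1-(m:ℤ)) := by
            have h := hper ((n:ℤ)-1-(m:ℤ))
            rw [show (n:ℤ)-1-(m:ℤ)-(n:ℤ) = -1-(m:ℤ) by ring] at h
            exact h.symm
          rw [hpm]
          exact hWmem _ (by simp only [codeT, Finset.mem_Icc]; omega)
        · have hcoef : (∑ i, cg i * Wv η n (m:ℤ) i) = 0 := by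
            push_neg at hmT
            by_cases hm1 : (m:ℤ) ≤ (l:ℤ)
            · rw [heval]
              exact hval0 _ (Finset.mem_Icc.mpr ⟨by omega, hm1⟩)
            · have hm2 : (n:ℤ)-(l:ℤ)-2 < (m:ℤ) := hmT (by omega)
              rw [hper (m:ℤ), show (m:ℤ)-(n:ℤ) = ((m:ℤ)-n) from rfl, heval]
              exact hval0 _ (Finset.mem_Icc.mpr ⟨by omega, by omega⟩)
          rw [hcoef, zero_smul]
          exact (codeC E η n l).zero_mem
      have hfinal : cg = (n:E)⁻¹ •
          (∑ m ∈ Finset.range n, (∑ i, cg i * Wv η n (m:ℤ) i) • Wv η n (-1-(m:ℤ))) := by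
        funext i0
        rw [Pi.smul_apply, Finset.sum_apply]
        simp only [Pi.smul_apply, smul_eq_mul]
        rw [dft_inv η hord hn0 cg i0, inv_mul_cancel_left₀ hnE]
      rw [hfinal]
      exact Submodule.smul_mem _ _ hmem
    have hwt_le : wt cg ≤ 2*l+3 := by
      have hsub : (Finset.univ.filter fun i : Fin n => cg i ≠ 0)
          ⊆ (Finset.univ.filter fun i : Fin n => (i:ℕ) < 2*l+3) := by
        intro i hi
        rw [Finset.mem_filter] at hi ⊢
        refine ⟨Finset.mem_univ _, ?_⟩
        have h1 : (i:ℕ) ≤ gp.natDegree := by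
          apply Polynomial.le_natDegree_of_ne_zero
          have := hi.2
          rw [hcg] at this
          exact this
        omega
      calc wt cg ≤ (Finset.univ.filter fun i : Fin n => (i:ℕ) < 2*l+3).card := by
            rw [wt]
            exact Finset.card_le_card hsub
        _ = 2*l+3 := card_filter_coe_lt (le_of_lt h2l3n)
    have hwt_eq : wt cg = 2*l+3 := le_antisymm hwt_le (hlow cg hcgC hcgne)
    constructor
    · exact ⟨cg, hcgC, hcgne, hwt_eq⟩
    · rintro w' ⟨c, hcC, hcne, rfl⟩
      exact hlow c hcC hcne
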